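/- If G is a simple graph on a finite vertex set with ν(G) > 0, then there exist adjacent vertices u and v of G such that ν(G − uv) < ν(G), i.e., removing the edge uv strictly decreases the nullity. -/

import Mathlib

open Matrix
open scoped Classical

/-- The closed neighborhood matrix of a simple graph over `ℤ₂`:
`N(G) u v = 1` iff `u = v` or `u` is adjacent to `v`. -/
noncomputable def nbhdMatrix {V : Type*} [Fintype V] (G : SimpleGraph V) :
    Matrix V V (ZMod 2) :=
  Matrix.of fun u v => if u = v ∨ G.Adj u v then 1 else 0

/-- The nullity of a matrix over `ℤ₂`: the dimension of its kernel. -/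
noncomputable def nullityM {V : Type*} [Fintype V] (M : Matrix V V (ZMod 2)) : ℕ :=
  Module.finrank (ZMod 2) (LinearMap.ker M.mulVecLin)

/-- The nullity `ν(G)` of a graph. -/
noncomputable def graphNullity {V : Type*} [Fintype V] (G : SimpleGraph V) : ℕ :=
  nullityM (nbhdMatrix G)

/-- Characteristic vector of a set of vertices. -/
noncomputable def chi {V : Type*} (A : Set V) : V → ZMod 2 :=
  fun v => if v ∈ A then 1 else 0

/-- A configuration `c` is solvable (w.r.t. the matrix `M`) if `M p = c` for some pattern `p`. -/
def Solv {V : Type*} [Fintype V] (M : Matrix V V (ZMod 2)) (c : V → ZMod 2) : Prop :=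
  ∃ p : V → ZMod 2, M.mulVec p = c

section Aux
variable {V : Type*} [Fintype V]

private lemma z2_sq (a : ZMod 2) : a * a = a := by revert a; decide
private lemma z2_add_self (a : ZMod 2) : a + a = 0 := by revert a; decide
private lemma z2_ne_zero {a : ZMod 2} (h : a ≠ 0) : a = 1 := by revert a h; decide

private lemma nbhd_entry (G : SimpleGraph V) (a b : V) :
    nbhdMatrix G a b = (if a = b then 1 else 0) + (if G.Adj a b then 1 else 0) := by
  by_cases hab : a = b
  · subst hab; simp [nbhdMatrix]
  · by_cases hadj : G.Adj a b <;> simp [nbhdMatrix, hab, hadj]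

private lemma nbhd_symm (G : SimpleGraph V) (a b : V) :
    nbhdMatrix G a b = nbhdMatrix G b a := by
  simp only [nbhdMatrix, Matrix.of_apply]
  congr 1
  simp only [eq_iff_iff]
  exact ⟨fun h => h.elim (fun h => Or.inl h.symm) (fun h => Or.inr h.symm),
    fun h => h.elim (fun h => Or.inl h.symm) (fun h => Or.inr h.symm)⟩

private lemma dot_comm (G : SimpleGraph V) (y a : V → ZMod 2) :
    y ⬝ᵥ (nbhdMatrix G *ᵥ a) = a ⬝ᵥ (nbhdMatrix G *ᵥ y) := by
  simp only [dotProduct, Matrix.mulVec, Finset.mul_sum]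
  rw [Finset.sum_comm]
  refine Finset.sum_congr rfl fun b _ => Finset.sum_congr rfl fun w _ => ?_
  rw [nbhd_symm G w b]; ring

private lemma quad (G : SimpleGraph V) (y : V → ZMod 2) :
    y ⬝ᵥ (nbhdMatrix G *ᵥ y) = ∑ w, y w := by
  have expand : y ⬝ᵥ (nbhdMatrix G *ᵥ y)
      = ∑ w, (y w * y w + ∑ b, y w * ((if G.Adj w b then 1 else 0) * y b)) := by
    simp only [dotProduct, Matrix.mulVec]
    refine Finset.sum_congr rfl fun w _ => ?_
    have h : (∑ b, nbhdMatrix G w b * y b)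
        = y w + ∑ b, (if G.Adj w b then 1 else 0) * y b := by
      rw [show (∑ b, nbhdMatrix G w b * y b)
          = ∑ b, ((if w = b then 1 else 0) * y b + (if G.Adj w b then 1 else 0) * y b) from
        Finset.sum_congr rfl fun b _ => by rw [nbhd_entry]; ring]
      rw [Finset.sum_add_distrib]
      congr 1
      simp
    rw [h, mul_add, Finset.mul_sum]
  rw [expand, Finset.sum_add_distrib]
  have h1 : ∑ w, y w * y w = ∑ w, y w := Finset.sum_congr rfl fun w _ => z2_sq (y w)
  have h2 : ∑ w, ∑ b, y w * ((if G.Adj w b then 1 else 0) * y b) = 0 := by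
    rw [← Fintype.sum_prod_type
      (f := fun p : V × V => y p.1 * ((if G.Adj p.1 p.2 then 1 else 0) * y p.2))]
    apply Finset.sum_ninvolution Prod.swap
    · intro p
      have e : (if G.Adj p.2 p.1 then (1 : ZMod 2) else 0) = (if G.Adj p.1 p.2 then 1 else 0) :=
        if_congr (G.adj_comm p.2 p.1) rfl rfl
      show y p.1 * ((if G.Adj p.1 p.2 then 1 else 0) * y p.2)
          + y p.2 * ((if G.Adj p.2 p.1 then 1 else 0) * y p.1) = 0
      rw [e, show y p.2 * ((if G.Adj p.1 p.2 then (1:ZMod 2) else 0) * y p.1)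
          = y p.1 * ((if G.Adj p.1 p.2 then 1 else 0) * y p.2) from by ring]
      exact z2_add_self _
    · intro p hfp hswap
      apply hfp
      have h12 : p.2 = p.1 := congrArg Prod.fst hswap
      show y p.1 * ((if G.Adj p.1 p.2 then 1 else 0) * y p.2) = 0
      rw [h12]
      simp [SimpleGraph.irrefl]
    · intro a; exact Finset.mem_univ _
    · intro a; exact Prod.swap_swap a
  rw [h1, h2, add_zero]


private lemma sum_ker (G : SimpleGraph V) {y : V → ZMod 2}
    (h : nbhdMatrix G *ᵥ y = 0) : ∑ w, y w = 0 := by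
  rw [← quad, h, dotProduct_zero]

/-- Sutner's theorem: the all-ones configuration is always solvable. -/
private lemma sutner (G : SimpleGraph V) :
    ∃ c : V → ZMod 2, nbhdMatrix G *ᵥ c = fun _ => 1 := by
  have hmem : (fun _ => (1 : ZMod 2)) ∈ LinearMap.range (nbhdMatrix G).mulVecLin := by
    rw [← Subspace.dualAnnihilator_dualCoannihilator_eq
      (W := LinearMap.range (nbhdMatrix G).mulVecLin), Submodule.mem_dualCoannihilator]
    intro f hf
    rw [Submodule.mem_dualAnnihilator] at hf
    set y : V → ZMod 2 := fun w => f (Pi.single w 1) with hy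
    have hker : nbhdMatrix G *ᵥ y = 0 := by
      funext a
      have h1 : (nbhdMatrix G *ᵥ y) a = f (∑ b, Pi.single b (nbhdMatrix G a b)) := by
        rw [map_sum]
        simp only [Matrix.mulVec, dotProduct]
        refine Finset.sum_congr rfl fun b _ => ?_
        have hsingle : Pi.single b (nbhdMatrix G a b)
            = nbhdMatrix G a b • (Pi.single b (1 : ZMod 2) : V → ZMod 2) := by
          funext w
          by_cases hw : w = b
          · subst hw; simp
          · simp [Pi.single_eq_of_ne hw]
        rw [hsingle, f.map_smul, smul_eq_mul]
      have h2 : (∑ b, Pi.single b (nbhdMatrix G a b)) = nbhdMatrix G *ᵥ Pi.single a 1 := by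
        rw [Finset.univ_sum_single (fun b => nbhdMatrix G a b)]
        funext c
        simp only [Matrix.mulVec, dotProduct]
        rw [Finset.sum_eq_single a]
        · rw [nbhd_symm, Pi.single_eq_same, mul_one]
        · intro b _ hb; rw [Pi.single_eq_of_ne hb, mul_zero]
        · intro hx; exact absurd (Finset.mem_univ a) hx
      rw [h1, h2]
      exact hf _ ⟨Pi.single a 1, rfl⟩
    have hone : f (fun _ => (1 : ZMod 2)) = ∑ w, y w := by
      rw [show (fun _ => (1 : ZMod 2)) = ∑ w : V, Pi.single w (1 : ZMod 2) from
        (Finset.univ_sum_single (fun _ => (1 : ZMod 2))).symm, map_sum]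
    rw [hone, sum_ker G hker]
  obtain ⟨c, hc⟩ := hmem
  exact ⟨c, hc⟩


private lemma z2_eq_of_add_eq_zero {a b : ZMod 2} (h : a + b = 0) : a = b := by
  revert a b; decide

private lemma delete_entry (G : SimpleGraph V) {u v : V} (huv : G.Adj u v) (a b : V) :
    nbhdMatrix (G.deleteEdges {s(u, v)}) a b
      = nbhdMatrix G a b
        + ((if a = u then (if b = v then 1 else 0) else 0)
          + (if a = v then (if b = u then 1 else 0) else 0)) := by
  have hne : u ≠ v := huv.ne
  have hadj' : (G.deleteEdges {s(u, v)}).Adj a b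
      ↔ (G.Adj a b ∧ ¬((a = u ∧ b = v) ∨ (a = v ∧ b = u))) := by
    rw [SimpleGraph.deleteEdges_adj]
    simp [Sym2.eq_iff]
  rw [nbhd_entry, nbhd_entry]
  by_cases hc : (a = u ∧ b = v) ∨ (a = v ∧ b = u)
  · have hGadj : G.Adj a b := by
      rcases hc with ⟨rfl, rfl⟩ | ⟨rfl, rfl⟩
      · exact huv
      · exact huv.symm
    have hG'adj : ¬ (G.deleteEdges {s(u, v)}).Adj a b := by rw [hadj']; tauto
    have hab : a ≠ b := hGadj.ne
    rcases hc with ⟨rfl, rfl⟩ | ⟨rfl, rfl⟩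
    · simp only [if_pos rfl, if_neg hab, if_neg hG'adj, if_pos hGadj, if_neg hne]
      decide
    · simp only [if_pos rfl, if_neg hab, if_neg hG'adj, if_pos hGadj, if_neg hne.symm]
      decide
  · have hiff : (G.deleteEdges {s(u, v)}).Adj a b ↔ G.Adj a b := by rw [hadj']; tauto
    have e1 : (if a = u then (if b = v then (1 : ZMod 2) else 0) else 0) = 0 := by
      split_ifs with h1 h2
      · exact absurd (Or.inl ⟨h1, h2⟩) hc
      · rfl
      · rfl
    have e2 : (if a = v then (if b = u then (1 : ZMod 2) else 0) else 0) = 0 := by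
      split_ifs with h1 h2
      · exact absurd (Or.inr ⟨h1, h2⟩) hc
      · rfl
      · rfl
    rw [e1, e2]; simp only [hiff]
    ring

private lemma delete_mulVec (G : SimpleGraph V) {u v : V} (huv : G.Adj u v) (y : V → ZMod 2) :
    nbhdMatrix (G.deleteEdges {s(u, v)}) *ᵥ y
      = fun w => (nbhdMatrix G *ᵥ y) w
          + ((if w = u then y v else 0) + (if w = v then y u else 0)) := by
  funext w
  simp only [Matrix.mulVec, dotProduct]
  rw [show (∑ b, nbhdMatrix (G.deleteEdges {s(u, v)}) w b * y b)
      = ∑ b, (nbhdMatrix G w b * y b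
        + ((if w = u then (if b = v then 1 else 0) else 0) * y b
          + (if w = v then (if b = u then 1 else 0) else 0) * y b)) from
    Finset.sum_congr rfl fun b _ => by rw [delete_entry G huv]; ring]
  rw [Finset.sum_add_distrib, Finset.sum_add_distrib]
  congr 1
  congr 1
  · by_cases hw : w = u <;> simp [hw, ite_mul, one_mul, zero_mul]
  · by_cases hw : w = v <;> simp [hw, ite_mul, one_mul, zero_mul]

private lemma key (G : SimpleGraph V) {u v : V} (huv : G.Adj u v) {y : V → ZMod 2}
    (hy : nbhdMatrix (G.deleteEdges {s(u, v)}) *ᵥ y = 0) (a : V → ZMod 2) :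
    y ⬝ᵥ (nbhdMatrix G *ᵥ a) = a u * y v + a v * y u := by
  have hMy : ∀ w, (nbhdMatrix G *ᵥ y) w
      = ((if w = u then y v else 0) + (if w = v then y u else 0)) := by
    intro w
    have h := congrFun (delete_mulVec G huv y) w
    rw [hy] at h
    simp only [Pi.zero_apply] at h
    exact (z2_eq_of_add_eq_zero h.symm)
  rw [dot_comm]
  simp only [dotProduct]
  rw [Finset.sum_congr rfl (fun w _ => by rw [hMy w])]
  rw [show (∑ w, a w * ((if w = u then y v else 0) + (if w = v then y u else 0)))
      = (∑ w, a w * (if w = u then y v else 0)) + ∑ w, a w * (if w = v then y u else 0) from by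
    rw [← Finset.sum_add_distrib]
    exact Finset.sum_congr rfl fun w _ => by ring]
  congr 1
  · simp [mul_ite, mul_zero]
  · simp [mul_ite, mul_zero]

private lemma core (G : SimpleGraph V) {u v : V} (huv : G.Adj u v)
    (hK' : ∀ y : V → ZMod 2,
      nbhdMatrix (G.deleteEdges {s(u, v)}) *ᵥ y = 0 → y u = 0 ∧ y v = 0)
    {x : V → ZMod 2} (hx : nbhdMatrix G *ᵥ x = 0) (hxuv : ¬(x u = 0 ∧ x v = 0)) :
    graphNullity (G.deleteEdges {s(u, v)}) < graphNullity G := by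
  have hle : LinearMap.ker (nbhdMatrix (G.deleteEdges {s(u, v)})).mulVecLin
      ≤ LinearMap.ker (nbhdMatrix G).mulVecLin := by
    intro y hy
    rw [LinearMap.mem_ker, Matrix.mulVecLin_apply] at hy ⊢
    obtain ⟨hu0, hv0⟩ := hK' y hy
    funext w
    have h := congrFun (delete_mulVec G huv y) w
    rw [hy] at h
    simp only [Pi.zero_apply, hu0, hv0, ite_self, add_zero] at h
    simpa using h.symm
  have hxK : x ∈ LinearMap.ker (nbhdMatrix G).mulVecLin := by
    rw [LinearMap.mem_ker, Matrix.mulVecLin_apply]; exact hx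
  have hxK' : x ∉ LinearMap.ker (nbhdMatrix (G.deleteEdges {s(u, v)})).mulVecLin := by
    intro hc
    rw [LinearMap.mem_ker, Matrix.mulVecLin_apply] at hc
    exact hxuv (hK' x hc)
  have hlt : LinearMap.ker (nbhdMatrix (G.deleteEdges {s(u, v)})).mulVecLin
      < LinearMap.ker (nbhdMatrix G).mulVecLin :=
    lt_of_le_of_ne hle (fun hEq => hxK' (hEq ▸ hxK))
  simpa only [graphNullity, nullityM] using Submodule.finrank_lt_finrank_of_lt hlt


private lemma z2_ne_one_add {a b : ZMod 2} (h : a ≠ b) : a + b = 1 := by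
  revert a b; decide

/-- Good edge, case A: both endpoints are lit by the kernel vector `x` and the
all-ones preimage `c` differs at the endpoints. -/
private lemma good_A1 (G : SimpleGraph V) {u v : V} (huv : G.Adj u v) {x c : V → ZMod 2}
    (hx : nbhdMatrix G *ᵥ x = 0) (hxu : x u = 1) (hxv : x v = 1)
    (hc : nbhdMatrix G *ᵥ c = fun _ => 1) (hcuv : c u + c v = 1) :
    graphNullity (G.deleteEdges {s(u, v)}) < graphNullity G := by
  refine core G huv ?_ hx ?_
  · intro y hy
    have e1 : x u * y v + x v * y u = 0 := by
      have h := key G huv hy x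
      rw [hx, dotProduct_zero] at h
      exact h.symm
    have hsum : ∑ w, y w = 0 := by
      have h := key G huv hy y
      rw [quad] at h
      rw [h, mul_comm (y v) (y u)]
      exact z2_add_self _
    have ec : c u * y v + c v * y u = 0 := by
      have h := key G huv hy c
      rw [hc] at h
      rw [show (y ⬝ᵥ fun _ => (1 : ZMod 2)) = ∑ w, y w from by
        simp [dotProduct]] at h
      rw [hsum] at h
      exact h.symm
    have solve : ∀ (p q cu cv yu yv : ZMod 2), p = 1 → q = 1 → cu + cv = 1
        → p * yv + q * yu = 0 → cu * yv + cv * yu = 0 → yu = 0 ∧ yv = 0 := by decide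
    exact solve _ _ _ _ _ _ hxu hxv hcuv e1 ec
  · rintro ⟨h1, -⟩
    rw [hxu] at h1
    exact one_ne_zero h1

/-- Good edge, case B: `x` lights `v` but not `u`, no kernel vector lights `u`,
and `c u = 1`. -/
private lemma good_B1 (G : SimpleGraph V) {u v : V} (huv : G.Adj u v) {x c : V → ZMod 2}
    (hx : nbhdMatrix G *ᵥ x = 0) (hxu : x u = 0) (hxv : x v = 1)
    (hc : nbhdMatrix G *ᵥ c = fun _ => 1) (hcu : c u = 1) :
    graphNullity (G.deleteEdges {s(u, v)}) < graphNullity G := by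
  refine core G huv ?_ hx ?_
  · intro y hy
    have e1 : x u * y v + x v * y u = 0 := by
      have h := key G huv hy x
      rw [hx, dotProduct_zero] at h
      exact h.symm
    rw [hxu, hxv] at e1
    have hsum : ∑ w, y w = 0 := by
      have h := key G huv hy y
      rw [quad] at h
      rw [h, mul_comm (y v) (y u)]
      exact z2_add_self _
    have ec : c u * y v + c v * y u = 0 := by
      have h := key G huv hy c
      rw [hc] at h
      rw [show (y ⬝ᵥ fun _ => (1 : ZMod 2)) = ∑ w, y w from by
        simp [dotProduct]] at h
      rw [hsum] at h
      exact h.symm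
    have solve : ∀ (cu cv yu yv : ZMod 2), cu = 1 → (0 : ZMod 2) * yv + 1 * yu = 0
        → cu * yv + cv * yu = 0 → yu = 0 ∧ yv = 0 := by decide
    exact solve _ _ _ _ hcu e1 ec
  · rintro ⟨-, h2⟩
    rw [hxv] at h2
    exact one_ne_zero h2

/-- Row expansion of the neighborhood matrix action. -/
private lemma row_expand (G : SimpleGraph V) (v : V) (a : V → ZMod 2) :
    (nbhdMatrix G *ᵥ a) v = a v + ∑ b, (if G.Adj v b then 1 else 0) * a b := by
  simp only [Matrix.mulVec, dotProduct]
  rw [show (∑ b, nbhdMatrix G v b * a b)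
      = ∑ b, ((if v = b then 1 else 0) * a b + (if G.Adj v b then 1 else 0) * a b) from
    Finset.sum_congr rfl fun b _ => by rw [nbhd_entry]; ring]
  rw [Finset.sum_add_distrib]
  congr 1
  simp

end Aux

/-- If `ν(G) > 0`, there is an edge `uv` whose removal strictly decreases the nullity. -/
theorem stmt0 {V : Type*} [Fintype V] (G : SimpleGraph V)
    (h : 0 < graphNullity G) :
    ∃ u v : V, G.Adj u v ∧
      graphNullity (G.deleteEdges {s(u, v)}) < graphNullity G := by
  -- a nonzero kernel vector
  have hker : ∃ x : V → ZMod 2, nbhdMatrix G *ᵥ x = 0 ∧ x ≠ 0 := by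
    by_contra hno
    push_neg at hno
    have hbot : LinearMap.ker (nbhdMatrix G).mulVecLin = ⊥ := by
      rw [eq_bot_iff]
      intro y hy
      rw [LinearMap.mem_ker, Matrix.mulVecLin_apply] at hy
      rw [Submodule.mem_bot]
      exact hno y hy
    rw [graphNullity, nullityM, hbot, finrank_bot] at h
    exact lt_irrefl 0 h
  obtain ⟨x, hx, hx0⟩ := hker
  obtain ⟨v, hv⟩ : ∃ v, x v ≠ 0 := by
    by_contra hno
    push_neg at hno
    exact hx0 (funext hno)
  have hxv : x v = 1 := z2_ne_zero hv
  obtain ⟨c, hc⟩ := sutner G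
  by_contra hbad
  have hbad' : ∀ a b : V, G.Adj a b →
      ¬ (graphNullity (G.deleteEdges {s(a, b)}) < graphNullity G) :=
    fun a b ha hl => hbad ⟨a, b, ha, hl⟩
  -- key claim: for every neighbor u of v, `c u = x u * c v`
  have hclaim : ∀ u : V, G.Adj v u → c u = x u * c v := by
    intro u hadj
    have huv : G.Adj u v := hadj.symm
    by_cases hxu : x u = 0
    · by_cases hcu : c u = 0
      · rw [hcu, hxu, zero_mul]
      · exact absurd (good_B1 G huv hx hxu hxv hc (z2_ne_zero hcu)) (hbad' u v huv)
    · have hxu1 : x u = 1 := z2_ne_zero hxu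
      by_cases hcuv : c u = c v
      · rw [hcuv, hxu1, one_mul]
      · exact absurd (good_A1 G huv hx hxu1 hxv hc (z2_ne_one_add hcuv)) (hbad' u v huv)
  -- derive the contradiction at vertex `v`
  have hxs : ∑ b, (if G.Adj v b then 1 else 0) * x b = 1 := by
    have h0 := congrFun hx v
    rw [row_expand] at h0
    simp only [Pi.zero_apply] at h0
    have := z2_eq_of_add_eq_zero h0
    rw [← this, hxv]
  have hcs : ∑ b, (if G.Adj v b then 1 else 0) * c b = c v := by
    rw [show (∑ b, (if G.Adj v b then 1 else 0) * c b)
        = ∑ b, ((if G.Adj v b then 1 else 0) * x b) * c v from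
      Finset.sum_congr rfl fun b _ => by
        by_cases hb : G.Adj v b
        · rw [if_pos hb, one_mul, one_mul, hclaim b hb]
        · rw [if_neg hb, zero_mul, zero_mul, zero_mul]]
    rw [← Finset.sum_mul, hxs, one_mul]
  have hMcv := congrFun hc v
  rw [row_expand, hcs] at hMcv
  rw [z2_add_self (c v)] at hMcv
  exact one_ne_zero hMcv.symm
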